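/- The free category functor from reflexive quivers to categories does not preserve binary products. Concretely, let R be the reflexive quiver with vertex set {0,1}, one non-identity arrow e : 0 → 1, and identity edges i(0), i(1); equip R × R with the product reflexive quiver structure. Then the free category on R × R (the path category in which identity edges are identified with identity morphisms) is not equivalent to the product of the free category on R with itself: in the free category on R × R the composite of (e, i(0)) followed by (i(1), e) is a morphism (0,0) → (1,1) distinct from the generator (e, e), whereas in the product of free categories the corresponding composite equals (e, e). -/

import Mathlib

open CategoryTheory

/-- The vertex set `{0, 1}` of the reflexive quiver `R`. -/
def RV : Type := Fin 2

instance : OfNat RV 0 := ⟨(0 : Fin 2)⟩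
instance : OfNat RV 1 := ⟨(1 : Fin 2)⟩

/-- The arrows of `R`: one non-identity arrow `e : 0 → 1` together with identity edges
`i v : v → v` for each vertex `v`. -/
inductive RHom : RV → RV → Type
  | e : RHom 0 1
  | i (v : RV) : RHom v v

instance : Quiver RV := ⟨RHom⟩

/-- `R` is a reflexive quiver with identity edges `i v`. -/
instance : ReflQuiver RV := ⟨RHom.i⟩

/-- The product quiver `R × R`, with arrows pairs of arrows componentwise. -/
instance : Quiver (RV × RV) := ⟨fun a b => ((a.1 ⟶ b.1) × (a.2 ⟶ b.2))⟩

/-- The product reflexive quiver `R × R`, with identity edges pairs of identity edges. -/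
instance : ReflQuiver (RV × RV) := ⟨fun a => (𝟙rq a.1, 𝟙rq a.2)⟩

/-- The quotient functor from the path category of `R × R` to the free category on the
reflexive quiver `R × R` (paths modulo deleting identity edges). -/
noncomputable def Qprod := Cat.FreeRefl.quotientFunctor (RV × RV)

/-- The quotient functor from the path category of `R` to the free category on the
reflexive quiver `R`. -/
noncomputable def Qone := Cat.FreeRefl.quotientFunctor RV


/-! ### Auxiliary definitions and lemmas for the proof -/

/-- Count: `1` for the non-identity arrow `e`, `0` for identity edges. -/
def cnt : ∀ {x y : RV}, RHom x y → ℕ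
  | _, _, .e => 1
  | _, _, .i _ => 0

/-- Each arrow of `R × R` is counted as `1` if it has a non-identity component and `0`
otherwise. -/
def phi {x y : RV × RV} (f : x ⟶ y) : Multiplicative ℕ :=
  Multiplicative.ofAdd (min (cnt f.1 + cnt f.2) 1)

/-- The counting prefunctor from `R × R` to the one-object category on `Multiplicative ℕ`. -/
def PP : (RV × RV) ⥤q SingleObj (Multiplicative ℕ) where
  obj _ := SingleObj.star _
  map := phi

lemma PPrel : ∀ (x y : Paths (RV × RV)) (f g : x ⟶ y), Cat.FreeReflRel (RV × RV) x y f g →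
    (Paths.lift PP).map f = (Paths.lift PP).map g := by
  intro x y f g rel
  cases rel
  rfl

/-- The induced counting functor on the free category on `R × R`. -/
noncomputable def F2 : Cat.FreeRefl (RV × RV) ⥤ SingleObj (Multiplicative ℕ) :=
  CategoryTheory.Quotient.lift _ (@Paths.lift (RV × RV) ((Quiv.of (RV × RV)).str') _ _ PP) PPrel

lemma F2_map {x y : Paths (RV × RV)} (p : x ⟶ y) :
    F2.map (Qprod.map p) = (Paths.lift PP).map p := rfl

/-- The prefunctor from `R` to the preorder category `Fin 2`. -/
def PF : RV ⥤q Fin 2 where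
  obj v := v
  map f := match f with
    | .e => homOfLE (by decide)
    | .i v => homOfLE (le_refl _)

/-- The comparison functor from the free category on `R` to the preorder `Fin 2`. -/
noncomputable def Fcmp : Cat.FreeRefl RV ⥤ Fin 2 :=
  CategoryTheory.Quotient.lift _ (@Paths.lift RV ((Quiv.of RV).str') _ _ PF)
    (fun _ _ _ _ _ => Subsingleton.elim _ _)

/-- The inclusion of homs of `Fin 2` back into the free category on `R`. -/
noncomputable def gmap : ∀ (a b : Fin 2), a ≤ b → ((Qone.obj a : Cat.FreeRefl RV) ⟶ Qone.obj b)
  | ⟨0, _⟩, ⟨0, _⟩, _ => 𝟙 _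
  | ⟨0, _⟩, ⟨1, _⟩, _ => Qone.map (Quiver.Hom.toPath RHom.e)
  | ⟨1, _⟩, ⟨1, _⟩, _ => 𝟙 _
  | ⟨1, _⟩, ⟨0, _⟩, h => absurd h (by simp)

lemma idQ' (v : RV) : (Cat.FreeRefl.quotientFunctor RV).map (Quiver.Hom.toPath (RHom.i v)) =
    𝟙 ((Cat.FreeRefl.quotientFunctor RV).obj v) := by
  have h := CategoryTheory.Quotient.sound (C := Cat.free.obj (Quiv.of RV))
    (Cat.FreeReflRel (V := RV)) (Cat.FreeReflRel.mk (X := v))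
  exact h.trans (Cat.FreeRefl.quotientFunctor_map_nil _)

/-- Identity edges map to identities in the free category. -/
lemma idQ (v : RV) : Qone.map (Quiver.Hom.toPath (RHom.i v)) = 𝟙 (Qone.obj v) := idQ' v

/-- The inclusion functor from the preorder `Fin 2` to the free category on `R`. -/
noncomputable def Gcmp : (Fin 2) ⥤ Cat.FreeRefl RV where
  obj a := Qone.obj a
  map {a b} f := gmap a b (leOfHom f)
  map_id a := by
    fin_cases a <;> rfl
  map_comp {a b c} f g := by
    have hab := leOfHom f
    have hbc := leOfHom g
    fin_cases a <;> fin_cases b <;> fin_cases c <;>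
      first
        | exact absurd hab (by decide)
        | exact absurd hbc (by decide)
        | simp [gmap]

lemma FG : Fcmp ⋙ Gcmp = 𝟭 (Cat.FreeRefl RV) := by
  apply Cat.FreeRefl.lift_unique'
  rw [Functor.comp_id]
  show (Cat.FreeRefl.quotientFunctor RV ⋙ Fcmp) ⋙ Gcmp = _
  have h1 : Cat.FreeRefl.quotientFunctor RV ⋙ Fcmp =
      @Paths.lift RV ((Quiv.of RV).str') _ _ PF :=
    CategoryTheory.Quotient.lift_spec _ _ _
  rw [h1]
  refine Paths.ext_functor rfl ?_
  rintro a b f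
  change RHom a b at f
  cases f with
  | e =>
    erw [eqToHom_refl, eqToHom_refl, Category.comp_id, Category.id_comp]
    show Gcmp.map (PF.map RHom.e) = _
    rfl
  | i v =>
    erw [eqToHom_refl, Category.comp_id, Category.id_comp]
    show Gcmp.map (PF.map (RHom.i a)) = _
    rw [idQ']
    show Gcmp.map (𝟙 _) = _
    rw [Gcmp.map_id]
    rfl

/-- The free category on `R` is thin: any two parallel morphisms agree. -/
lemma thin {X Y : Cat.FreeRefl RV} (f g : X ⟶ Y) : f = g := by
  have h3 : Fcmp.map f = Fcmp.map g := Subsingleton.elim _ _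
  have h1 := Functor.congr_hom FG f
  have h2 := Functor.congr_hom FG g
  simp only [Functor.comp_map, Functor.id_map] at h1 h2
  rw [h3, h2] at h1
  exact ((cancel_mono _).1 ((cancel_epi _).1 h1.symm))

/-- In the free category on `R × R`, the composite of `(e, i 0)` and `(i 1, e)` differs
from the generator `(e, e)`. -/
lemma distinct :
    Qprod.map (Quiver.Hom.toPath
        ((RHom.e, RHom.i 0) : (((0 : RV), (0 : RV)) : RV × RV) ⟶ ((1 : RV), (0 : RV)))) ≫
      Qprod.map (Quiver.Hom.toPath
        ((RHom.i 1, RHom.e) : (((1 : RV), (0 : RV)) : RV × RV) ⟶ ((1 : RV), (1 : RV)))) ≠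
    Qprod.map (Quiver.Hom.toPath
        ((RHom.e, RHom.e) : (((0 : RV), (0 : RV)) : RV × RV) ⟶ ((1 : RV), (1 : RV)))) := by
  intro h
  have h2 := congrArg F2.map h
  rw [Functor.map_comp] at h2
  have h3 : (Multiplicative.ofAdd 1 * Multiplicative.ofAdd 1 : Multiplicative ℕ) =
      Multiplicative.ofAdd 1 := h2
  exact absurd h3 (by decide)

/-- The free category functor from reflexive quivers to categories does
not preserve binary products.  Concretely, the free category on `R × R` is not equivalent
to the product of the free category on `R` with itself: in the free category on `R × R`
the composite of `(e, i 0)` followed by `(i 1, e)` is distinct from the generator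
`(e, e)`, whereas in the product of free categories the corresponding composite equals
`(e, e)`. -/
theorem stmt9 :
    IsEmpty (Cat.FreeRefl (RV × RV) ≌ Cat.FreeRefl RV × Cat.FreeRefl RV) ∧
    Qprod.map (Quiver.Hom.toPath
        ((RHom.e, RHom.i 0) : (((0 : RV), (0 : RV)) : RV × RV) ⟶ ((1 : RV), (0 : RV)))) ≫
      Qprod.map (Quiver.Hom.toPath
        ((RHom.i 1, RHom.e) : (((1 : RV), (0 : RV)) : RV × RV) ⟶ ((1 : RV), (1 : RV)))) ≠
    Qprod.map (Quiver.Hom.toPath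
        ((RHom.e, RHom.e) : (((0 : RV), (0 : RV)) : RV × RV) ⟶ ((1 : RV), (1 : RV)))) ∧
    @CategoryStruct.comp (Cat.FreeRefl RV × Cat.FreeRefl RV) _
      (Qone.obj (0 : RV), Qone.obj (0 : RV))
      (Qone.obj (1 : RV), Qone.obj (0 : RV))
      (Qone.obj (1 : RV), Qone.obj (1 : RV))
      (Qone.map (Quiver.Hom.toPath RHom.e), Qone.map (Quiver.Hom.toPath (RHom.i 0)))
      (Qone.map (Quiver.Hom.toPath (RHom.i 1)), Qone.map (Quiver.Hom.toPath RHom.e)) =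
    (Qone.map (Quiver.Hom.toPath RHom.e), Qone.map (Quiver.Hom.toPath RHom.e)) := by
  refine ⟨⟨fun E => ?_⟩, distinct, ?_⟩
  · -- part 1: no equivalence, since the product is thin but FreeRefl (R × R) is not
    apply distinct
    apply E.functor.map_injective
    exact Prod.ext (thin _ _) (thin _ _)
  · -- part 3: in the product of free categories the composite equals the generator
    refine Prod.ext ?_ ?_
    · show Qone.map _ ≫ Qone.map _ = _
      rw [idQ, Category.comp_id]
    · show Qone.map _ ≫ Qone.map _ = _
      rw [idQ, Category.id_comp]
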